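/- Fix ℓ ≥ 1 and ℓ-tuples of nonnegative integers α, β. For every m ≥ 1 and n ≥ 0, the number of (α,β)-colored order-ℓ Motzkin paths of length n and height m equals the coefficient of t^n in t^m · M^ℓ_0(α,β,t) · (M^ℓ_0(β,β,t))^m, where M^ℓ_0(γ,δ,t) is the generating function for (γ,δ)-colored order-ℓ Motzkin paths of height 0. -/

import Mathlib

open Finset PowerSeries

/-- The validity condition for a single step `(s, c)` (vertical displacement `s`, color `c`)
of an `(α,β)`-colored order-`ℓ` Motzkin path, where `h` is the height at which the step ends.
Up steps `s = 1` and maximal down steps `D_ℓ` are uncolored (color `0`); a down step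
`D_d = (1,-d)` with `d < ℓ` gets one of `α d` colors if it ends at height `0` and one of
`β d` colors if it ends at positive height. -/
def MotzkinStepOK (ℓ : ℕ) (α β : ℕ → ℕ) (s : ℤ) (c : ℕ) (h : ℤ) : Prop :=
  (s = 1 ∧ c = 0) ∨
  ∃ d : ℕ, d ≤ ℓ ∧ s = -(d : ℤ) ∧
    (if d = ℓ then c = 0 else c < (if h = 0 then α d else β d))

/-- The set of `(α,β)`-colored order-`ℓ` Motzkin paths of length `n` and height `m`,
encoded as lists of (displacement, color) pairs.  The path stays weakly above `y = 0`. -/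
def ColoredMotzkinSet (ℓ : ℕ) (α β : ℕ → ℕ) (n m : ℕ) : Set (List (ℤ × ℕ)) :=
  {L | L.length = n ∧ (L.map Prod.fst).sum = (m : ℤ) ∧
    ∀ i < n, 0 ≤ ((L.take (i + 1)).map Prod.fst).sum ∧
      MotzkinStepOK ℓ α β (L.getD i (0, 0)).1 (L.getD i (0, 0)).2
        (((L.take (i + 1)).map Prod.fst).sum)}

/-- `M ℓ α β n m` is the number of `(α,β)`-colored order-`ℓ` Motzkin paths of
length `n` and height `m`. -/
noncomputable def M (ℓ : ℕ) (α β : ℕ → ℕ) (n m : ℕ) : ℕ :=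
  Nat.card (ColoredMotzkinSet ℓ α β n m)

namespace MotzkinAux

abbrev St := List (ℤ × ℕ)

/-- Height of the path after `k` steps. -/
def psum (L : St) (k : ℕ) : ℤ := ((L.take k).map Prod.fst).sum

variable {ℓ : ℕ} {α β : ℕ → ℕ}

lemma psum_zero (L : St) : psum L 0 = 0 := by simp [psum]

lemma psum_eq (L : St) (k : ℕ) : psum L k = ((L.map Prod.fst).take k).sum := by
  rw [psum, List.map_take]

lemma psum_length (L : St) : psum L L.length = (L.map Prod.fst).sum := by
  simp [psum]

lemma psum_succ (L : St) (i : ℕ) (h : i < L.length) :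
    psum L (i + 1) = psum L i + (L[i]).1 := by
  rw [psum_eq, psum_eq, List.sum_take_succ _ i (by simpa using h)]
  simp

lemma psum_append_le (Q R : St) (k : ℕ) (h : k ≤ Q.length) :
    psum (Q ++ R) k = psum Q k := by
  rw [psum, List.take_append]
  simp [Nat.sub_eq_zero_of_le, h, psum]

lemma psum_append_add (Q R : St) (k : ℕ) :
    psum (Q ++ R) (Q.length + k) = (Q.map Prod.fst).sum + psum R k := by
  rw [psum, List.take_add, List.take_left, List.drop_left, List.map_append, List.sum_append]
  rfl

lemma psum_join (Q P : St) (k : ℕ) :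
    psum (Q ++ (1, 0) :: P) (Q.length + 1 + k) = (Q.map Prod.fst).sum + 1 + psum P k := by
  rw [Nat.add_assoc, psum_append_add]
  have h1 : psum ((1, 0) :: P) (1 + k) = 1 + psum P k := by
    rw [Nat.add_comm 1 k, psum, List.take_succ_cons]
    simp [psum]
  rw [h1]; ring

lemma psum_drop (L : St) (t k : ℕ) :
    psum (L.drop t) k = psum L (t + k) - psum L t := by
  have h1 : psum L (t + k) = psum L t + psum (L.drop t) k := by
    rw [psum, List.take_add, List.map_append, List.sum_append]; rfl
  omega

lemma psum_nonneg {L : St} {n m : ℕ} (h : L ∈ ColoredMotzkinSet ℓ α β n m)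
    {k : ℕ} (hk : k ≤ n) : 0 ≤ psum L k := by
  rcases Nat.eq_zero_or_pos k with rfl | hk0
  · simp [psum_zero]
  · obtain ⟨i, rfl⟩ : ∃ i, k = i + 1 := ⟨k - 1, by omega⟩
    exact (h.2.2 i (by omega)).1

/-- The step condition for a `(β,β)`-colored step does not depend on the height,
and at nonzero height the `(α,β)` condition agrees with the `(β,β)` one. -/
lemma stepOK_ne_zero {s : ℤ} {c : ℕ} {h : ℤ} (hh : h ≠ 0) (h' : ℤ) :
    MotzkinStepOK ℓ α β s c h ↔ MotzkinStepOK ℓ β β s c h' := by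
  simp only [MotzkinStepOK, if_neg hh, ite_self]

/-- Restatement of membership in terms of `psum`. -/
lemma mem_iff {L : St} {n m : ℕ} :
    L ∈ ColoredMotzkinSet ℓ α β n m ↔
      L.length = n ∧ (L.map Prod.fst).sum = (m : ℤ) ∧
        ∀ i < n, 0 ≤ psum L (i + 1) ∧
          MotzkinStepOK ℓ α β (L.getD i (0, 0)).1 (L.getD i (0, 0)).2 (psum L (i + 1)) :=
  Iff.rfl

/-- Gluing a path of height `m`, an up step and a (shifted) path of height `0`. -/
lemma join_mem {Q P : St} {a b m : ℕ} (hQ : Q ∈ ColoredMotzkinSet ℓ α β a m)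
    (hP : P ∈ ColoredMotzkinSet ℓ β β b 0) :
    Q ++ (1, 0) :: P ∈ ColoredMotzkinSet ℓ α β (a + 1 + b) (m + 1) := by
  rw [mem_iff] at hQ hP ⊢
  obtain ⟨hQl, hQs, hQc⟩ := hQ
  obtain ⟨hPl, hPs, hPc⟩ := hP
  refine ⟨by simp [hQl, hPl]; omega, ?_, ?_⟩
  · simp only [List.map_append, List.sum_append, List.map_cons, List.sum_cons]
    rw [hQs, hPs]; push_cast; ring
  · intro i hi
    rcases lt_trichotomy i a with hia | rfl | hia
    · -- inside Q
      have h1 : psum (Q ++ (1, 0) :: P) (i + 1) = psum Q (i + 1) :=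
        psum_append_le _ _ _ (by omega)
      have h2 : (Q ++ (1, 0) :: P).getD i (0, 0) = Q.getD i (0, 0) := by
        rw [List.getD_eq_getElem _ _ (by simp [hQl]; omega),
          List.getD_eq_getElem _ _ (by omega : i < Q.length),
          List.getElem_append_left (by omega)]
      rw [h1, h2]
      exact hQc i hia
    · -- the up step
      have h1 : psum (Q ++ (1, 0) :: P) (i + 1) = (m : ℤ) + 1 := by
        have h0 := psum_join Q P 0
        rw [hQl, hQs, psum_zero] at h0
        simpa using h0
      have h2 : (Q ++ (1, 0) :: P).getD i (0, 0) = (1, 0) := by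
        rw [List.getD_eq_getElem _ _ (by simp [hQl]),
          List.getElem_append_right (by omega : Q.length ≤ i)]
        simp [hQl]
      rw [h1, h2]
      exact ⟨by positivity, Or.inl ⟨rfl, rfl⟩⟩
    · -- inside P
      obtain ⟨j, rfl⟩ : ∃ j, i = a + 1 + j := ⟨i - a - 1, by omega⟩
      have hj : j < b := by omega
      have h1 : psum (Q ++ (1, 0) :: P) (a + 1 + j + 1) = (m : ℤ) + 1 + psum P (j + 1) := by
        have h0 := psum_join Q P (j + 1)
        rw [hQl, hQs] at h0
        rw [show a + 1 + j + 1 = a + 1 + (j + 1) by ring, h0]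
      have h2 : (Q ++ (1, 0) :: P).getD (a + 1 + j) (0, 0) = P.getD j (0, 0) := by
        rw [List.getD_eq_getElem _ _ (by simp [hQl, hPl]; omega),
          List.getD_eq_getElem _ _ (by omega : j < P.length),
          List.getElem_append_right (by omega : Q.length ≤ a + 1 + j)]
        simp only [List.getElem_cons]
        split
        · omega
        · congr 1; omega
      have hPnn : 0 ≤ psum P (j + 1) := (hPc j hj).1
      rw [h1, h2]
      refine ⟨by positivity, ?_⟩
      rw [stepOK_ne_zero (by positivity) (psum P (j + 1))]
      exact (hPc j hj).2

/-- Splitting a path of height `m+1` at the last up step from height `m`. -/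
lemma exists_split {L : St} {n m : ℕ} (h : L ∈ ColoredMotzkinSet ℓ α β n (m + 1)) :
    ∃ a < n, L.take a ∈ ColoredMotzkinSet ℓ α β a m ∧
      L.drop (a + 1) ∈ ColoredMotzkinSet ℓ β β (n - 1 - a) 0 ∧
      L = L.take a ++ (1, 0) :: L.drop (a + 1) := by
  classical
  rw [mem_iff] at h
  obtain ⟨hl, hs, hc⟩ := h
  have hn0 : 0 < n := by
    rcases Nat.eq_zero_or_pos n with rfl | h0
    · rw [List.length_eq_zero_iff] at hl
      subst hl; simp at hs; omega
    · exact h0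
  have hpn : psum L n = (m : ℤ) + 1 := by
    rw [← hl, psum_length, hs]; push_cast; ring
  set s := (Finset.range n).filter (fun k => psum L k ≤ (m : ℤ)) with hsdef
  have hs0 : (0 : ℕ) ∈ s := by
    simp [hsdef, psum_zero, hn0]
  have hsne : s.Nonempty := ⟨0, hs0⟩
  set a := s.max' hsne with hadef
  have haS : a ∈ s := s.max'_mem hsne
  have han : a < n := Finset.mem_range.mp (Finset.mem_filter.mp haS).1
  have haP : psum L a ≤ (m : ℤ) := (Finset.mem_filter.mp haS).2
  have hgt : ∀ k, a < k → k ≤ n → (m : ℤ) < psum L k := by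
    intro k hk1 hk2
    by_contra hle
    push_neg at hle
    rcases Nat.lt_or_ge k n with hkn | hkn
    · have hks : k ∈ s := Finset.mem_filter.mpr ⟨Finset.mem_range.mpr hkn, hle⟩
      have := s.le_max' k hks
      omega
    · have hkeq : k = n := by omega
      subst hkeq; rw [hpn] at hle; omega
  have hLa : a < L.length := by omega
  have hps : psum L (a + 1) = psum L a + (L[a]).1 := psum_succ L a hLa
  have hgt1 : (m : ℤ) < psum L (a + 1) := hgt (a + 1) (by omega) (by omega)
  have hstep := hc a han
  rw [List.getD_eq_getElem _ _ hLa] at hstep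
  have hup : (L[a]).1 = 1 ∧ (L[a]).2 = 0 := by
    rcases hstep.2 with ⟨h1, h2⟩ | ⟨d, hd, hsd, _⟩
    · exact ⟨h1, h2⟩
    · exfalso
      rw [hsd] at hps
      omega
  have hLa1 : L[a] = ((1 : ℤ), (0 : ℕ)) := Prod.ext hup.1 hup.2
  have hpa : psum L a = (m : ℤ) := by rw [hup.1] at hps; omega
  have hpa1 : psum L (a + 1) = (m : ℤ) + 1 := by rw [hup.1] at hps; omega
  have hdec : L = L.take a ++ (1, 0) :: L.drop (a + 1) := by
    conv_lhs => rw [← List.take_append_drop a L, List.drop_eq_getElem_cons hLa, hLa1]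
  refine ⟨a, han, ?_, ?_, hdec⟩
  · -- the prefix
    rw [mem_iff]
    refine ⟨by rw [List.length_take]; omega, hpa, ?_⟩
    intro i hia
    have hQt : psum (L.take a) (i + 1) = psum L (i + 1) := by
      rw [psum, List.take_take, show min (i + 1) a = i + 1 by omega]; rfl
    have hQg : (L.take a).getD i (0, 0) = L.getD i (0, 0) := by
      rw [List.getD_eq_getElem _ _ (by rw [List.length_take]; omega),
        List.getD_eq_getElem _ _ (by omega : i < L.length)]
      exact List.getElem_take
    rw [hQt, hQg]
    exact hc i (by omega)
  · -- the suffix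
    rw [mem_iff]
    have hdl : (L.drop (a + 1)).length = n - 1 - a := by
      rw [List.length_drop]; omega
    refine ⟨hdl, ?_, ?_⟩
    · have h1 := psum_length (L.drop (a + 1))
      rw [hdl] at h1
      rw [← h1, psum_drop, show a + 1 + (n - 1 - a) = n by omega, hpn, hpa1]
      push_cast; ring
    · intro j hj
      have ht : psum (L.drop (a + 1)) (j + 1) = psum L (a + 1 + j + 1) - ((m : ℤ) + 1) := by
        rw [psum_drop, hpa1, show a + 1 + (j + 1) = a + 1 + j + 1 by ring]
      have hgt2 : (m : ℤ) < psum L (a + 1 + j + 1) := hgt _ (by omega) (by omega)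
      have hgd : (L.drop (a + 1)).getD j (0, 0) = L.getD (a + 1 + j) (0, 0) := by
        rw [List.getD_eq_getElem _ _ (by rw [List.length_drop]; omega),
          List.getD_eq_getElem _ _ (by omega : a + 1 + j < L.length),
          List.getElem_drop]
      have hK := hc (a + 1 + j) (by omega)
      rw [ht, hgd]
      constructor
      · omega
      · rw [← stepOK_ne_zero (by omega : psum L (a + 1 + j + 1) ≠ 0)
            (psum L (a + 1 + j + 1) - ((m : ℤ) + 1))]
        exact hK.2

/-- Uniqueness of the split point. -/
lemma split_ne {Q1 P1 Q2 P2 : St} {a1 a2 b1 b2 m : ℕ} (hlt : a1 < a2)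
    (hQ1 : Q1 ∈ ColoredMotzkinSet ℓ α β a1 m) (hP1 : P1 ∈ ColoredMotzkinSet ℓ β β b1 0)
    (hQ2 : Q2 ∈ ColoredMotzkinSet ℓ α β a2 m) (hP2 : P2 ∈ ColoredMotzkinSet ℓ β β b2 0)
    (heq : Q1 ++ (1, 0) :: P1 = Q2 ++ (1, 0) :: P2) : False := by
  have hlen : a1 + 1 + b1 = a2 + 1 + b2 := by
    have := congrArg List.length heq
    simpa [hQ1.1, hP1.1, hQ2.1, hP2.1, Nat.add_comm, Nat.add_assoc, Nat.add_left_comm] using this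
  set k := a2 - a1 - 1 with hk
  have hkb : k ≤ b1 := by omega
  have h1 : psum (Q1 ++ (1, 0) :: P1) a2 = (m : ℤ) + 1 + psum P1 k := by
    have := psum_join Q1 P1 k
    rw [hQ1.1, hQ1.2.1, show a1 + 1 + k = a2 by omega] at this
    exact this
  have h2 : psum (Q1 ++ (1, 0) :: P1) a2 = (m : ℤ) := by
    rw [heq, psum_append_le _ _ _ (le_of_eq hQ2.1.symm),
      show a2 = Q2.length from hQ2.1.symm, psum_length, hQ2.2.1]
  have h3 : 0 ≤ psum P1 k := psum_nonneg hP1 hkb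
  omega

lemma finite_lists (B : Set (ℤ × ℕ)) (hB : B.Finite) (n : ℕ) :
    {L : St | L.length = n ∧ ∀ x ∈ L, x ∈ B}.Finite := by
  have := hB.to_subtype
  apply ((List.finite_length_eq ↥B n).image (List.map Subtype.val)).subset
  rintro L ⟨h1, h2⟩
  refine ⟨L.attach.map (fun x => ⟨x.1, h2 x.1 x.2⟩), by simpa using h1, ?_⟩
  rw [List.map_map]
  exact List.attach_map_subtype_val L

lemma cms_finite (ℓ : ℕ) (α β : ℕ → ℕ) (n m : ℕ) :
    (ColoredMotzkinSet ℓ α β n m).Finite := by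
  classical
  set N := (Finset.range (ℓ + 1)).sup (fun d => max (α d) (β d)) with hN
  have hBfin : (Set.Icc (-(ℓ : ℤ)) 1 ×ˢ Set.Iic N).Finite :=
    (Set.finite_Icc _ _).prod (Set.finite_Iic _)
  apply (finite_lists _ hBfin n).subset
  rintro L ⟨h1, _, h3⟩
  refine ⟨h1, fun x hx => ?_⟩
  obtain ⟨i, hi, rfl⟩ := List.mem_iff_getElem.mp hx
  have hOK := (h3 i (by omega)).2
  rw [List.getD_eq_getElem _ _ hi] at hOK
  simp only [Set.mem_prod, Set.mem_Icc, Set.mem_Iic]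
  rcases hOK with ⟨hs, hc⟩ | ⟨d, hd, hs, hc⟩
  · rw [hs, hc]
    refine ⟨⟨by omega, le_refl _⟩, Nat.zero_le _⟩
  · have hdN : max (α d) (β d) ≤ N :=
      Finset.le_sup (f := fun d => max (α d) (β d))
        (Finset.mem_range.mpr (Nat.lt_succ_of_le hd))
    rw [hs]
    refine ⟨⟨by omega, by omega⟩, ?_⟩
    by_cases hdl : d = ℓ
    · rw [if_pos hdl] at hc; omega
    · rw [if_neg hdl] at hc
      split_ifs at hc <;> omega

/-- The finset of colored Motzkin paths. -/
noncomputable def F (ℓ : ℕ) (α β : ℕ → ℕ) (n m : ℕ) : Finset St :=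
  (cms_finite ℓ α β n m).toFinset

lemma mem_F {L : St} {n m : ℕ} : L ∈ F ℓ α β n m ↔ L ∈ ColoredMotzkinSet ℓ α β n m :=
  Set.Finite.mem_toFinset _

lemma M_eq_card (n m : ℕ) : M ℓ α β n m = (F ℓ α β n m).card := by
  rw [M, Nat.card_coe_set_eq, Set.ncard_eq_toFinset_card _ (cms_finite ℓ α β n m)]
  rfl

/-- The counting recurrence. -/
lemma card_step (ℓ : ℕ) (α β : ℕ → ℕ) (m n : ℕ) :
    M ℓ α β n (m + 1) = ∑ a ∈ Finset.range n, M ℓ α β a m * M ℓ β β (n - 1 - a) 0 := by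
  classical
  have hF : F ℓ α β n (m + 1) =
      (Finset.range n).biUnion (fun a =>
        ((F ℓ α β a m) ×ˢ (F ℓ β β (n - 1 - a) 0)).image
          (fun p : St × St => p.1 ++ (1, 0) :: p.2)) := by
    ext L
    simp only [mem_F, Finset.mem_biUnion, Finset.mem_range, Finset.mem_image,
      Finset.mem_product]
    constructor
    · intro hL
      obtain ⟨a, ha, hQ, hP, hdec⟩ := exists_split hL
      exact ⟨a, ha, (L.take a, L.drop (a + 1)), ⟨hQ, hP⟩, hdec.symm⟩
    · rintro ⟨a, ha, ⟨Q, P⟩, ⟨hQ, hP⟩, rfl⟩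
      have hmem := join_mem hQ hP
      rwa [show a + 1 + (n - 1 - a) = n by omega] at hmem
  rw [M_eq_card, hF, Finset.card_biUnion]
  · refine Finset.sum_congr rfl (fun a _ => ?_)
    rw [Finset.card_image_of_injOn, Finset.card_product, M_eq_card, M_eq_card]
    rintro ⟨Q1, P1⟩ h1 ⟨Q2, P2⟩ h2 heq
    simp only [Finset.mem_coe, Finset.mem_product, mem_F] at h1 h2
    simp only at heq
    have hlen : Q1.length = Q2.length := by rw [h1.1.1, h2.1.1]
    obtain ⟨hQ, hP⟩ := List.append_inj heq hlen
    simp only [List.cons.injEq] at hP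
    simp [hQ, hP.2]
  · intro a1 ha1 a2 ha2 hne
    simp only [Function.onFun]
    rw [Finset.disjoint_left]
    rintro L hL1 hL2
    simp only [Finset.mem_image, Finset.mem_product] at hL1 hL2
    obtain ⟨⟨Q1, P1⟩, ⟨hQ1, hP1⟩, he1⟩ := hL1
    obtain ⟨⟨Q2, P2⟩, ⟨hQ2, hP2⟩, he2⟩ := hL2
    rw [mem_F] at hQ1 hP1 hQ2 hP2
    have heq : Q1 ++ (1, 0) :: P1 = Q2 ++ (1, 0) :: P2 := by rw [he1, he2]
    rcases Nat.lt_or_ge a1 a2 with hlt | hge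
    · exact split_ne hlt hQ1 hP1 hQ2 hP2 heq
    · exact split_ne (by omega) hQ2 hP2 hQ1 hP1 heq.symm

/-- The generating function identity, for every `m`. -/
lemma gf_all (ℓ : ℕ) (α β : ℕ → ℕ) (m n : ℕ) :
    M ℓ α β n m =
      PowerSeries.coeff n
        ((PowerSeries.X : PowerSeries ℕ) ^ m *
          PowerSeries.mk (fun j => M ℓ α β j 0) *
          (PowerSeries.mk (fun j => M ℓ β β j 0)) ^ m) := by
  induction m generalizing n with
  | zero => simp
  | succ m ih =>
    set f : PowerSeries ℕ := PowerSeries.mk (fun j => M ℓ α β j 0) with hf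
    set g : PowerSeries ℕ := PowerSeries.mk (fun j => M ℓ β β j 0) with hg
    have hser : (PowerSeries.X : PowerSeries ℕ) ^ (m + 1) * f * g ^ (m + 1) =
        ((PowerSeries.X : PowerSeries ℕ) ^ m * f * g ^ m) * (PowerSeries.X * g) := by
      ring
    rw [card_step, hser, PowerSeries.coeff_mul,
      Finset.Nat.sum_antidiagonal_eq_sum_range_succ_mk, Finset.sum_range_succ]
    have hz : PowerSeries.coeff (n - n) (PowerSeries.X * g) = 0 := by
      simp
    rw [hz, mul_zero, add_zero]
    refine Finset.sum_congr rfl (fun i hi => ?_)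
    rw [Finset.mem_range] at hi
    rw [show n - i = (n - 1 - i) + 1 by omega, PowerSeries.coeff_succ_X_mul,
      hg, PowerSeries.coeff_mk, ← ih i]

end MotzkinAux

/-- The generating-function identity
`M_m^ℓ(α,β,t) = t^m · M_0^ℓ(α,β,t) · (M_0^ℓ(β,β,t))^m`, coefficientwise. -/
theorem motzkin_column_gf (ℓ : ℕ) (hℓ : 1 ≤ ℓ) (α β : ℕ → ℕ)
    (m : ℕ) (hm : 1 ≤ m) (n : ℕ) :
    M ℓ α β n m =
      PowerSeries.coeff n
        ((PowerSeries.X : PowerSeries ℕ) ^ m *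
          PowerSeries.mk (fun j => M ℓ α β j 0) *
          (PowerSeries.mk (fun j => M ℓ β β j 0)) ^ m) := by
  exact MotzkinAux.gf_all ℓ α β m n
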